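/- Let m > 0, M > m/2, and A, B > 0. Then there exist constants 0 < c₁ ≤ c₂ depending only on m and M such that c₁ ≤ ( ∫_0^1 (u(1-u))^{m/2-1} (A + B u)^{-M} du ) · A^{M - m/2} (A+B)^{m/2} ≤ c₂. -/

import Mathlib

open MeasureTheory Set Real

lemma aux_rpow_le (q : ℝ) {x : ℝ} (h1 : 1/2 ≤ x) (h2 : x ≤ 1) :
    x ^ q ≤ max 1 ((1/2:ℝ) ^ q) := by
  rcases le_or_gt 0 q with hq | hq
  · exact le_max_of_le_left (Real.rpow_le_one (by linarith) h2 hq)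
  · exact le_max_of_le_right (Real.rpow_le_rpow_of_nonpos (by norm_num) h1 hq.le)

lemma aux_le_rpow (q : ℝ) {x : ℝ} (h1 : 1/2 ≤ x) (h2 : x ≤ 1) :
    min 1 ((1/2:ℝ) ^ q) ≤ x ^ q := by
  rcases le_or_gt 0 q with hq | hq
  · exact le_trans (min_le_right _ _) (Real.rpow_le_rpow (by norm_num) h1 hq)
  · refine le_trans (min_le_left _ _) ?_
    simpa using Real.rpow_le_rpow_of_nonpos (by linarith : (0:ℝ) < x) h2 hq.le

lemma aux_int_Ioo (p : ℝ) (hp : -1 < p) {s : ℝ} (hs : 0 ≤ s) :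
    ∫ u in Ioo (0:ℝ) s, u ^ p = s ^ (p+1) / (p+1) := by
  rw [← integral_Ioc_eq_integral_Ioo, ← intervalIntegral.integral_of_le hs,
    integral_rpow (Or.inl hp), Real.zero_rpow (by linarith), sub_zero]

lemma aux_int_Ioo2 (q : ℝ) (hq : q ≠ -1) {s t : ℝ} (h0 : 0 < s) (hst : s ≤ t) :
    ∫ u in Ioo s t, u ^ q = (t ^ (q+1) - s ^ (q+1)) / (q+1) := by
  rw [← integral_Ioc_eq_integral_Ioo, ← intervalIntegral.integral_of_le hst,
    integral_rpow (Or.inr ⟨hq, by rw [Set.uIcc_of_le hst]; intro h; exact absurd (h.1) (by linarith)⟩)]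

lemma aux_xp_int (p : ℝ) (hp : -1 < p) {s : ℝ} (hs : 0 ≤ s) :
    IntegrableOn (fun u : ℝ => u ^ p) (Ioo (0:ℝ) s) := by
  have := intervalIntegral.intervalIntegrable_rpow' (a := (0:ℝ)) (b := s) hp
  rw [intervalIntegrable_iff, uIoc_of_le hs] at this
  exact this.mono_set Ioo_subset_Ioc_self

lemma aux_1xp_int (p : ℝ) (hp : -1 < p) :
    IntegrableOn (fun u : ℝ => (1 - u) ^ p) (Ioo (1/2:ℝ) 1) := by
  have := (intervalIntegral.intervalIntegrable_rpow' (a := (0:ℝ)) (b := 1/2) hp).comp_sub_left 1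
  norm_num [intervalIntegrable_iff] at this
  exact this.mono_set Ioo_subset_Ioc_self

lemma aux_f_cont (p q A B : ℝ) (hA : 0 < A) (hB : 0 < B) :
    ContinuousOn (fun u : ℝ => (u*(1-u))^p * (A + B*u)^q) (Ioo (0:ℝ) 1) := by
  apply ContinuousOn.mul
  · apply ContinuousOn.rpow_const
    · exact (continuous_id.mul (continuous_const.sub continuous_id)).continuousOn
    · intro x hx
      exact Or.inl (by nlinarith [hx.1, hx.2])
  · apply ContinuousOn.rpow_const
    · exact (continuous_const.add (continuous_const.mul continuous_id)).continuousOn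
    · intro x hx
      exact Or.inl (by nlinarith [hx.1])

lemma aux_f_int (p M : ℝ) (hp : -1 < p) (hM : 0 < M) {A B : ℝ} (hA : 0 < A) (hB : 0 < B) :
    IntegrableOn (fun u : ℝ => (u*(1-u))^p * (A + B*u)^(-M)) (Ioo (0:ℝ) 1) := by
  set κ := max 1 ((1/2:ℝ) ^ p) with hκ
  have hκ1 : 1 ≤ κ := le_max_left _ _
  set f := fun u : ℝ => (u*(1-u))^p * (A + B*u)^(-M) with hf
  have hfnn : ∀ u ∈ Ioo (0:ℝ) 1, 0 ≤ f u := by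
    intro u hu
    exact mul_nonneg (Real.rpow_nonneg (by nlinarith [hu.1, hu.2]) _)
      (Real.rpow_nonneg (by nlinarith [hu.1]) _)
  have hDA : ∀ u ∈ Ioo (0:ℝ) 1, (A + B*u)^(-M) ≤ A^(-M) := by
    intro u hu
    exact Real.rpow_le_rpow_of_nonpos hA (by nlinarith [hu.1]) (by linarith)
  have h1 : IntegrableOn f (Ioo (0:ℝ) (1/2)) := by
    refine Integrable.mono' (((aux_xp_int p hp (by norm_num)).const_mul (κ * A^(-M))))
      (((aux_f_cont p (-M) A B hA hB).mono
        (Ioo_subset_Ioo le_rfl (by norm_num : (1/2:ℝ) ≤ 1))).aestronglyMeasurable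
        measurableSet_Ioo) ?_
    filter_upwards [ae_restrict_mem measurableSet_Ioo] with u hu
    have hu1 : (0:ℝ) < u := hu.1
    have hu2 : u < 1/2 := hu.2
    have huI : u ∈ Ioo (0:ℝ) 1 := ⟨hu1, by linarith⟩
    rw [Real.norm_eq_abs, abs_of_nonneg (hfnn u huI), hf]
    simp only
    rw [Real.mul_rpow hu1.le (by linarith : (0:ℝ) ≤ 1 - u)]
    have e1 : (1-u)^p ≤ κ := aux_rpow_le p (by linarith) (by linarith)
    have e2 := hDA u huI
    calc u^p * (1-u)^p * (A+B*u)^(-M) ≤ u^p * κ * A^(-M) := by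
          apply mul_le_mul (mul_le_mul_of_nonneg_left e1 (Real.rpow_nonneg hu1.le p)) e2
            (Real.rpow_nonneg (by nlinarith) _)
          positivity
      _ = κ * A^(-M) * u^p := by ring
  have h2 : IntegrableOn f (Ioo (1/2:ℝ) 1) := by
    refine Integrable.mono' (((aux_1xp_int p hp).const_mul (κ * A^(-M))))
      (((aux_f_cont p (-M) A B hA hB).mono
        (Ioo_subset_Ioo (by norm_num : (0:ℝ) ≤ 1/2) le_rfl)).aestronglyMeasurable
        measurableSet_Ioo) ?_
    filter_upwards [ae_restrict_mem measurableSet_Ioo] with u hu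
    have hu1 : (1/2:ℝ) < u := hu.1
    have hu2 : u < 1 := hu.2
    have huI : u ∈ Ioo (0:ℝ) 1 := ⟨by linarith, hu2⟩
    rw [Real.norm_eq_abs, abs_of_nonneg (hfnn u huI), hf]
    simp only
    rw [Real.mul_rpow (by linarith : (0:ℝ) ≤ u) (by linarith : (0:ℝ) ≤ 1 - u)]
    have e1 : u^p ≤ κ := aux_rpow_le p hu1.le hu2.le
    have e2 := hDA u huI
    calc u^p * (1-u)^p * (A+B*u)^(-M) ≤ κ * (1-u)^p * A^(-M) := by
          apply mul_le_mul (mul_le_mul_of_nonneg_right e1 (Real.rpow_nonneg (by linarith) p)) e2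
            (Real.rpow_nonneg (by nlinarith) _)
          exact mul_nonneg (le_trans zero_le_one hκ1) (Real.rpow_nonneg (by linarith) p)
      _ = κ * A^(-M) * (1-u)^p := by ring
  have : IntegrableOn f (Ioo (0:ℝ) (1/2) ∪ Ico (1/2:ℝ) 1) := by
    refine IntegrableOn.union h1 ?_
    rwa [integrableOn_Ico_iff_integrableOn_Ioo]
  refine this.mono_set ?_
  rw [Ioo_union_Ico_eq_Ioo (by norm_num) (by norm_num)]


lemma aux_int_1x (p : ℝ) (hp : -1 < p) :
    ∫ u in Ioo (1/2:ℝ) 1, (1-u)^p = (1/2:ℝ)^(p+1)/(p+1) := by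
  rw [← integral_Ioc_eq_integral_Ioo, ← intervalIntegral.integral_of_le (by norm_num : (1/2:ℝ) ≤ 1)]
  have e := intervalIntegral.integral_comp_sub_left (a := (1/2:ℝ)) (b := 1) (fun x : ℝ => x ^ p) 1
  norm_num at e
  rw [e, integral_rpow (Or.inl hp), Real.zero_rpow (by linarith), sub_zero]

set_option maxHeartbeats 1000000 in
/-- For `m > 0`, `M > m/2`, there are constants `0 < c₁ ≤ c₂` depending
only on `m` and `M` such that for all `A, B > 0`,
`∫_0^1 (u(1-u))^{m/2-1} (A + Bu)^{-M} du ≍ A^{-(M-m/2)} (A+B)^{-m/2}`. -/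
theorem stmt_14 (m M : ℝ) (hm : 0 < m) (hM : m / 2 < M) :
    ∃ c₁ c₂ : ℝ, 0 < c₁ ∧ c₁ ≤ c₂ ∧
      ∀ A B : ℝ, 0 < A → 0 < B →
        c₁ ≤ (∫ u in Set.Ioo (0 : ℝ) 1, (u * (1 - u)) ^ (m / 2 - 1) * (A + B * u) ^ (-M))
              * (A ^ (M - m / 2) * (A + B) ^ (m / 2)) ∧
        (∫ u in Set.Ioo (0 : ℝ) 1, (u * (1 - u)) ^ (m / 2 - 1) * (A + B * u) ^ (-M))
              * (A ^ (M - m / 2) * (A + B) ^ (m / 2)) ≤ c₂ := by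
  set h : ℝ := m / 2 with hh
  set p : ℝ := h - 1 with hpdef
  have hh0 : 0 < h := by rw [hh]; linarith
  have hp : -1 < p := by rw [hpdef]; linarith
  have hMh : h < M := hM
  have hM0 : 0 < M := lt_trans hh0 hMh
  have hph : p + 1 = h := by rw [hpdef]; ring
  set κ : ℝ := max 1 ((1/2:ℝ)^p) with hκdef
  set κ' : ℝ := min 1 ((1/2:ℝ)^p) with hκ'def
  have hκ1 : 1 ≤ κ := le_max_left _ _
  have hκ'0 : 0 < κ' := lt_min one_pos (Real.rpow_pos_of_pos (by norm_num) p)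
  have hκ'1 : κ' ≤ 1 := min_le_left _ _
  have h2h : (0:ℝ) < (2:ℝ)^(-h) := Real.rpow_pos_of_pos (by norm_num) _
  have h2Mh : (0:ℝ) < (2:ℝ)^(M-h) := Real.rpow_pos_of_pos (by norm_num) _
  have h32 : (0:ℝ) < (3/2:ℝ)^(-M) := Real.rpow_pos_of_pos (by norm_num) _
  refine ⟨κ' * (3/2:ℝ)^(-M) * (2:ℝ)^(-h) / h,
          κ * ((2:ℝ)^(-h)/h + (2:ℝ)^(M-h)/(M-h) + (2:ℝ)^(M-h)/h), ?_, ?_, ?_⟩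
  · positivity
  · have e1 : κ' * (3/2:ℝ)^(-M) * (2:ℝ)^(-h) / h ≤ κ * ((2:ℝ)^(-h)/h) := by
      rw [mul_div_assoc]
      apply mul_le_mul _ le_rfl (by positivity) (by linarith)
      calc κ' * (3/2:ℝ)^(-M) ≤ 1 * 1 := by
            apply mul_le_mul hκ'1 _ h32.le zero_le_one
            exact Real.rpow_le_one_of_one_le_of_nonpos (by norm_num) (by linarith)
        _ = 1 := by norm_num
        _ ≤ κ := hκ1
    refine le_trans e1 ?_
    have : (0:ℝ) ≤ κ * ((2:ℝ)^(M-h)/(M-h) + (2:ℝ)^(M-h)/h) := by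
      apply mul_nonneg (by linarith)
      have : (0:ℝ) < M - h := by linarith
      positivity
    nlinarith
  · intro A B hA hB
    set b : ℝ := A + B with hbdef
    have hb0 : 0 < b := by rw [hbdef]; linarith
    have hAb : A < b := by rw [hbdef]; linarith
    set s : ℝ := A / (2*b) with hsdef
    have hs0 : 0 < s := by rw [hsdef]; positivity
    have hs12 : s < 1/2 := by
      rw [hsdef, div_lt_div_iff₀ (by linarith) (by norm_num)]
      linarith
    have hs1 : s < 1 := by linarith
    set f : ℝ → ℝ := fun u => (u * (1 - u)) ^ p * (A + B * u) ^ (-M) with hfdef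
    have hint : IntegrableOn f (Ioo (0:ℝ) 1) := aux_f_int p M hp hM0 hA hB
    have hfnn : ∀ u ∈ Ioo (0:ℝ) 1, 0 ≤ f u := by
      intro u hu
      refine mul_nonneg (Real.rpow_nonneg (mul_nonneg hu.1.le (by linarith [hu.2])) _)
        (Real.rpow_nonneg ?_ _)
      have := mul_nonneg hB.le hu.1.le
      linarith
    -- positive atoms
    have hAh : (0:ℝ) < A ^ h := Real.rpow_pos_of_pos hA h
    have hAM : (0:ℝ) < A ^ M := Real.rpow_pos_of_pos hA M
    have hbh : (0:ℝ) < b ^ h := Real.rpow_pos_of_pos hb0 h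
    have hbM : (0:ℝ) < b ^ M := Real.rpow_pos_of_pos hb0 M
    have h2hp : (0:ℝ) < (2:ℝ)^h := Real.rpow_pos_of_pos (by norm_num) h
    have h2Mp : (0:ℝ) < (2:ℝ)^M := Real.rpow_pos_of_pos (by norm_num) M
    have hh' : h ≠ 0 := ne_of_gt hh0
    have hMh0 : M - h ≠ 0 := ne_of_gt (by linarith)
    have hY : (0:ℝ) < A^(h-M) * b^(-h) := by positivity
    have hX : (0:ℝ) < A^(M-h) * b^h := by positivity
    have hYX : (A^(h-M) * b^(-h)) * (A^(M-h) * b^h) = 1 := by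
      have : (A^(h-M) * b^(-h)) * (A^(M-h) * b^h) = (A^(h-M) * A^(M-h)) * (b^(-h) * b^h) := by
        ring
      rw [this, ← Real.rpow_add hA, ← Real.rpow_add hb0]
      norm_num
    -- helper: integrability of u^q on Ioo s t with 0 < s
    have aux_xq_int : ∀ (q : ℝ) {t1 t2 : ℝ}, 0 < t1 → t1 ≤ t2 →
        IntegrableOn (fun u : ℝ => u ^ q) (Ioo t1 t2) := by
      intro q t1 t2 h0 hst
      have h0' : (0:ℝ) ∉ uIcc t1 t2 := by
        rw [uIcc_of_le hst]
        rintro ⟨h1, h2⟩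
        linarith
      have := intervalIntegral.intervalIntegrable_rpow (μ := volume) (a := t1) (b := t2) (r := q) (Or.inr h0')
      rw [intervalIntegrable_iff, uIoc_of_le hst] at this
      exact this.mono_set Ioo_subset_Ioc_self
    have hbs : b * s = A / 2 := by
      rw [hsdef]
      field_simp
    set I : ℝ := ∫ u in Ioo (0:ℝ) 1, f u with hIdef
    -- ===== LOWER BOUND =====
    have hImono : ∫ u in Ioo (0:ℝ) s, f u ≤ I := by
      apply setIntegral_mono_set hint
      · filter_upwards [ae_restrict_mem measurableSet_Ioo] with u hu using hfnn u hu
      · exact (Ioo_subset_Ioo le_rfl hs1.le).eventuallyLE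
    have hlow : κ' * ((3/2) * A)^(-M) * (s^h / h) ≤ ∫ u in Ioo (0:ℝ) s, f u := by
      have heval : ∫ u in Ioo (0:ℝ) s, (κ' * ((3/2)*A)^(-M)) * u^p
          = κ' * ((3/2)*A)^(-M) * (s^h/h) := by
        rw [MeasureTheory.integral_const_mul, aux_int_Ioo p hp hs0.le, hph]
      rw [← heval]
      apply setIntegral_mono_on ((aux_xp_int p hp hs0.le).const_mul _)
        (hint.mono_set (Ioo_subset_Ioo le_rfl hs1.le)) measurableSet_Ioo
      intro u hu
      have hu0 : 0 < u := hu.1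
      have hus : u < s := hu.2
      have hu12 : u < 1/2 := lt_trans hus hs12
      have hD0 : 0 < A + B * u := by
        have := mul_pos hB hu0
        linarith
      have hDle : A + B * u ≤ 3/2 * A := by
        have h1 : B * u ≤ b * s :=
          mul_le_mul (by rw [hbdef]; linarith) hus.le hu0.le hb0.le
        rw [hbs] at h1
        linarith
      have e1 : κ' ≤ (1-u)^p := aux_le_rpow p (by linarith) (by linarith)
      have e2 : ((3/2)*A)^(-M) ≤ (A+B*u)^(-M) :=
        Real.rpow_le_rpow_of_nonpos hD0 hDle (by linarith)
      calc κ' * ((3/2)*A)^(-M) * u^p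
          ≤ ((1-u)^p * (A+B*u)^(-M)) * u^p := by
            apply mul_le_mul_of_nonneg_right _ (Real.rpow_nonneg hu0.le p)
            exact mul_le_mul e1 e2 (Real.rpow_nonneg (by linarith) _)
              (Real.rpow_nonneg (by linarith) _)
        _ = f u := by
            rw [hfdef]
            simp only
            rw [Real.mul_rpow hu0.le (by linarith : (0:ℝ) ≤ 1 - u)]
            ring
    have hc1eq : κ' * ((3/2) * A)^(-M) * (s^h / h) * (A^(M-h) * b^h)
        = κ' * (3/2:ℝ)^(-M) * (2:ℝ)^(-h) / h := by
      rw [hsdef, Real.mul_rpow (by norm_num : (0:ℝ) ≤ 3/2) hA.le,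
        Real.div_rpow hA.le (by positivity), Real.mul_rpow (by norm_num : (0:ℝ) ≤ 2) hb0.le,
        Real.rpow_neg hA.le, Real.rpow_sub hA, Real.rpow_neg (by norm_num : (0:ℝ) ≤ 2)]
      field_simp
    have hlower : κ' * (3/2:ℝ)^(-M) * (2:ℝ)^(-h) / h ≤ I * (A^(M-h) * b^h) := by
      rw [← hc1eq]
      exact mul_le_mul_of_nonneg_right (le_trans hlow hImono) hX.le
    -- ===== UPPER BOUND =====
    have hdisj1 : Disjoint (Ioo (0:ℝ) s) (Ico s 1) :=
      Set.disjoint_left.mpr (fun x hx hx' => absurd hx.2 (not_lt.mpr hx'.1))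
    have hdisj2 : Disjoint (Ioo (s:ℝ) (1/2)) (Ico (1/2:ℝ) 1) :=
      Set.disjoint_left.mpr (fun x hx hx' => absurd hx.2 (not_lt.mpr hx'.1))
    have hsub1 : Ico s 1 ⊆ Ioo (0:ℝ) 1 := fun x hx => ⟨lt_of_lt_of_le hs0 hx.1, hx.2⟩
    have hsub2 : Ico (1/2:ℝ) 1 ⊆ Ioo (0:ℝ) 1 := fun x hx => ⟨by linarith [hx.1], hx.2⟩
    have hsplit1 : I = (∫ u in Ioo (0:ℝ) s, f u) + ∫ u in Ioo s 1, f u := by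
      rw [hIdef, ← Set.Ioo_union_Ico_eq_Ioo hs0 hs1.le,
        setIntegral_union hdisj1 measurableSet_Ico
          (hint.mono_set (Ioo_subset_Ioo le_rfl hs1.le)) (hint.mono_set hsub1),
        integral_Ico_eq_integral_Ioo]
    have hsplit2 : ∫ u in Ioo s 1, f u
        = (∫ u in Ioo s (1/2:ℝ), f u) + ∫ u in Ioo (1/2:ℝ) 1, f u := by
      rw [← Set.Ioo_union_Ico_eq_Ioo hs12 (by norm_num : (1/2:ℝ) ≤ 1),
        setIntegral_union hdisj2 measurableSet_Ico
          (hint.mono_set (fun x hx => ⟨lt_trans hs0 hx.1, by linarith [hx.2]⟩))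
          (hint.mono_set hsub2),
        integral_Ico_eq_integral_Ioo]
    have hP1 : ∫ u in Ioo (0:ℝ) s, f u ≤ κ * A^(-M) * (s^h/h) := by
      have heval : ∫ u in Ioo (0:ℝ) s, (κ * A^(-M)) * u^p = κ * A^(-M) * (s^h/h) := by
        rw [MeasureTheory.integral_const_mul, aux_int_Ioo p hp hs0.le, hph]
      rw [← heval]
      apply setIntegral_mono_on (hint.mono_set (Ioo_subset_Ioo le_rfl hs1.le))
        ((aux_xp_int p hp hs0.le).const_mul _) measurableSet_Ioo
      intro u hu
      have hu0 : 0 < u := hu.1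
      have hu12 : u < 1/2 := lt_trans hu.2 hs12
      have hBu := mul_pos hB hu0
      have hD0 : 0 < A + B * u := by linarith
      have e1 : (1-u)^p ≤ κ := aux_rpow_le p (by linarith) (by linarith)
      have e2 : (A+B*u)^(-M) ≤ A^(-M) :=
        Real.rpow_le_rpow_of_nonpos hA (by linarith) (by linarith)
      calc f u = ((1-u)^p * (A+B*u)^(-M)) * u^p := by
            rw [hfdef]
            simp only
            rw [Real.mul_rpow hu0.le (by linarith : (0:ℝ) ≤ 1 - u)]
            ring
        _ ≤ (κ * A^(-M)) * u^p := by
            apply mul_le_mul_of_nonneg_right _ (Real.rpow_nonneg hu0.le p)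
            exact mul_le_mul e1 e2 (Real.rpow_nonneg hD0.le _)
              (by linarith)
    have hP2 : ∫ u in Ioo s (1/2:ℝ), f u ≤ κ * b^(-M) * (s^(h-M)/(M-h)) := by
      have heval : ∫ u in Ioo s (1/2:ℝ), (κ * b^(-M)) * u^(p-M)
          = κ * b^(-M) * (((1/2:ℝ)^(h-M) - s^(h-M))/(h-M)) := by
        rw [MeasureTheory.integral_const_mul,
          aux_int_Ioo2 (p-M) (by intro hc; apply absurd hph; intro hc2; rw [sub_eq_iff_eq_add] at hc; nlinarith) hs0 hs12.le]
        congr 2 <;> rw [show p - M + 1 = h - M by rw [← hph]; ring]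
      have hEbound : κ * b^(-M) * (((1/2:ℝ)^(h-M) - s^(h-M))/(h-M))
          ≤ κ * b^(-M) * (s^(h-M)/(M-h)) := by
        apply mul_le_mul_of_nonneg_left _ (by positivity)
        have hhalf : (0:ℝ) ≤ (1/2:ℝ)^(h-M) := Real.rpow_nonneg (by norm_num) _
        have hMh' : (0:ℝ) < M - h := by linarith
        have heq : ((1/2:ℝ)^(h-M) - s^(h-M))/(h-M) = (s^(h-M) - (1/2:ℝ)^(h-M))/(M-h) := by
          rw [div_eq_div_iff (by linarith) (by linarith)]
          ring
        rw [heq]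
        gcongr
        linarith
      refine le_trans ?_ hEbound
      rw [← heval]
      apply setIntegral_mono_on
        (hint.mono_set (fun x hx => ⟨lt_trans hs0 hx.1, by linarith [hx.2]⟩))
        ((aux_xq_int (p-M) hs0 hs12.le).const_mul _) measurableSet_Ioo
      intro u hu
      have hu0 : 0 < u := lt_trans hs0 hu.1
      have hu12 : u < 1/2 := hu.2
      have hD0 : 0 < A + B * u := by
        have := mul_pos hB hu0
        linarith
      have hbu : b * u ≤ A + B * u := by
        have h1 : A * u ≤ A * 1 := mul_le_mul_of_nonneg_left (by linarith) hA.le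
        rw [hbdef, add_mul]
        rw [mul_one] at h1
        linarith
      have e1 : (1-u)^p ≤ κ := aux_rpow_le p (by linarith) (by linarith)
      have e2 : (A+B*u)^(-M) ≤ b^(-M) * u^(-M) := by
        rw [← Real.mul_rpow hb0.le hu0.le]
        exact Real.rpow_le_rpow_of_nonpos (by positivity) hbu (by linarith)
      calc f u = ((1-u)^p * (A+B*u)^(-M)) * u^p := by
            rw [hfdef]
            simp only
            rw [Real.mul_rpow hu0.le (by linarith : (0:ℝ) ≤ 1 - u)]
            ring
        _ ≤ (κ * (b^(-M) * u^(-M))) * u^p := by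
            apply mul_le_mul_of_nonneg_right _ (Real.rpow_nonneg hu0.le p)
            exact mul_le_mul e1 e2 (Real.rpow_nonneg hD0.le _) (by linarith)
        _ = (κ * b^(-M)) * (u^(-M) * u^p) := by ring
        _ = (κ * b^(-M)) * u^(p-M) := by
            rw [← Real.rpow_add hu0]
            congr 1
            ring
    have hP3 : ∫ u in Ioo (1/2:ℝ) 1, f u ≤ κ * (b/2)^(-M) * ((1/2:ℝ)^h/h) := by
      have heval : ∫ u in Ioo (1/2:ℝ) 1, (κ * (b/2)^(-M)) * (1-u)^p
          = κ * (b/2)^(-M) * ((1/2:ℝ)^h/h) := by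
        rw [MeasureTheory.integral_const_mul, aux_int_1x p hp, hph]
      rw [← heval]
      apply setIntegral_mono_on (hint.mono_set (fun x hx => ⟨by linarith [hx.1], hx.2⟩))
        ((aux_1xp_int p hp).const_mul _) measurableSet_Ioo
      intro u hu
      have hu12 : (1/2:ℝ) < u := hu.1
      have hu1 : u < 1 := hu.2
      have hD0 : 0 < A + B * u := by
        have := mul_pos hB (lt_trans (by norm_num) hu12 : (0:ℝ) < u)
        linarith
      have hbD : b/2 ≤ A + B * u := by
        have h1 : B * (1/2) ≤ B * u := mul_le_mul_of_nonneg_left hu12.le hB.le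
        rw [hbdef]
        linarith
      have e1 : u^p ≤ κ := aux_rpow_le p hu12.le hu1.le
      have e2 : (A+B*u)^(-M) ≤ (b/2)^(-M) :=
        Real.rpow_le_rpow_of_nonpos (by positivity) hbD (by linarith)
      calc f u = (u^p * (A+B*u)^(-M)) * (1-u)^p := by
            rw [hfdef]
            simp only
            rw [Real.mul_rpow (by linarith : (0:ℝ) ≤ u) (by linarith : (0:ℝ) ≤ 1 - u)]
            ring
        _ ≤ (κ * (b/2)^(-M)) * (1-u)^p := by
            apply mul_le_mul_of_nonneg_right _ (Real.rpow_nonneg (by linarith) p)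
            exact mul_le_mul e1 e2 (Real.rpow_nonneg hD0.le _) (by linarith)
    -- conversions to C_i * Y form
    have hY1 : κ * A^(-M) * (s^h/h) = (κ * (2:ℝ)^(-h)/h) * (A^(h-M) * b^(-h)) := by
      rw [hsdef, Real.div_rpow hA.le (by positivity),
        Real.mul_rpow (by norm_num : (0:ℝ) ≤ 2) hb0.le,
        Real.rpow_neg hA.le, Real.rpow_sub hA, Real.rpow_neg (by norm_num : (0:ℝ) ≤ 2),
        Real.rpow_neg hb0.le]
      field_simp
    have e2b : b^(h-M) * b^(-h) = b^(-M) := by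
      rw [← Real.rpow_add hb0]
      congr 1
      ring
    have e2c : (2:ℝ)^(M-h) * (2:ℝ)^(h-M) = 1 := by
      rw [← Real.rpow_add (by norm_num : (0:ℝ) < 2)]
      norm_num
    have n2h : ((2:ℝ)^(h-M)) ≠ 0 := (Real.rpow_pos_of_pos (by norm_num) _).ne'
    have nbh : (b^(h-M)) ≠ 0 := (Real.rpow_pos_of_pos hb0 _).ne'
    have hY2 : κ * b^(-M) * (s^(h-M)/(M-h)) = (κ * (2:ℝ)^(M-h)/(M-h)) * (A^(h-M) * b^(-h)) := by
      have e3 : s^(h-M) = A^(h-M) / ((2:ℝ)^(h-M) * b^(h-M)) := by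
        rw [hsdef, Real.div_rpow hA.le (by positivity),
          Real.mul_rpow (by norm_num : (0:ℝ) ≤ 2) hb0.le]
      have hcore : b^(-M) * s^(h-M) = (2:ℝ)^(M-h) * (A^(h-M) * b^(-h)) := by
        rw [e3, ← e2b]
        field_simp
        linear_combination (-1:ℝ) * e2c
      calc κ * b^(-M) * (s^(h-M)/(M-h)) = (κ/(M-h)) * (b^(-M) * s^(h-M)) := by ring
        _ = (κ/(M-h)) * ((2:ℝ)^(M-h) * (A^(h-M) * b^(-h))) := by rw [hcore]
        _ = (κ * (2:ℝ)^(M-h)/(M-h)) * (A^(h-M) * b^(-h)) := by ring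
    have hY3 : κ * (b/2)^(-M) * ((1/2:ℝ)^h/h) ≤ (κ * (2:ℝ)^(M-h)/h) * (A^(h-M) * b^(-h)) := by
      have hkey : b^(h-M) ≤ A^(h-M) := Real.rpow_le_rpow_of_nonpos hA hAb.le (by linarith)
      have hhalf : ((1/2:ℝ))^h = ((2:ℝ)^h)⁻¹ := by
        rw [show (1/2:ℝ) = 2⁻¹ by norm_num, Real.inv_rpow (by norm_num : (0:ℝ) ≤ 2)]
      have hcore : (b/2)^(-M) * ((1/2:ℝ)^h) = (2:ℝ)^(M-h) * (b^(h-M) * b^(-h)) := by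
        rw [hhalf, Real.div_rpow hb0.le (by norm_num : (0:ℝ) ≤ 2), e2b,
          Real.rpow_sub (by norm_num : (0:ℝ) < 2),
          Real.rpow_neg (by norm_num : (0:ℝ) ≤ 2)]
        field_simp
      have heq : κ * (b/2)^(-M) * ((1/2:ℝ)^h/h) = (κ * (2:ℝ)^(M-h)/h) * (b^(h-M) * b^(-h)) := by
        calc κ * (b/2)^(-M) * ((1/2:ℝ)^h/h) = (κ/h) * ((b/2)^(-M) * ((1/2:ℝ)^h)) := by ring
          _ = (κ/h) * ((2:ℝ)^(M-h) * (b^(h-M) * b^(-h))) := by rw [hcore]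
          _ = (κ * (2:ℝ)^(M-h)/h) * (b^(h-M) * b^(-h)) := by ring
      rw [heq]
      apply mul_le_mul_of_nonneg_left _ (by positivity)
      exact mul_le_mul_of_nonneg_right hkey (Real.rpow_nonneg hb0.le _)
    have hupper : I * (A^(M-h) * b^h)
        ≤ κ * ((2:ℝ)^(-h)/h + (2:ℝ)^(M-h)/(M-h) + (2:ℝ)^(M-h)/h) := by
      have hexpand : (κ * (2:ℝ)^(-h)/h + κ * (2:ℝ)^(M-h)/(M-h) + κ * (2:ℝ)^(M-h)/h)
            * (A^(h-M) * b^(-h))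
          = (κ * (2:ℝ)^(-h)/h) * (A^(h-M) * b^(-h))
            + (κ * (2:ℝ)^(M-h)/(M-h)) * (A^(h-M) * b^(-h))
            + (κ * (2:ℝ)^(M-h)/h) * (A^(h-M) * b^(-h)) := by ring
      have hsum : I ≤ (κ * (2:ℝ)^(-h)/h + κ * (2:ℝ)^(M-h)/(M-h) + κ * (2:ℝ)^(M-h)/h)
          * (A^(h-M) * b^(-h)) := by
        rw [hsplit1, hsplit2, hexpand]
        have l1 := hP1.trans_eq hY1
        have l2 := hP2.trans_eq hY2
        have l3 := hP3.trans hY3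
        linarith
      calc I * (A^(M-h) * b^h)
          ≤ ((κ * (2:ℝ)^(-h)/h + κ * (2:ℝ)^(M-h)/(M-h) + κ * (2:ℝ)^(M-h)/h)
              * (A^(h-M) * b^(-h))) * (A^(M-h) * b^h) :=
            mul_le_mul_of_nonneg_right hsum hX.le
        _ = (κ * (2:ℝ)^(-h)/h + κ * (2:ℝ)^(M-h)/(M-h) + κ * (2:ℝ)^(M-h)/h)
              * ((A^(h-M) * b^(-h)) * (A^(M-h) * b^h)) := by ring
        _ = κ * ((2:ℝ)^(-h)/h + (2:ℝ)^(M-h)/(M-h) + (2:ℝ)^(M-h)/h) := by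
            rw [hYX, mul_one]
            ring
    exact ⟨hlower, hupper⟩
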